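/- For 0 < γ < 1 and every integer k ≥ 0, the coefficient q_k = -8((k+1)^{3-γ} - k^{3-γ}) + 4(3-γ)((k+1)^{2-γ} + k^{2-γ}) satisfies q_k > (2/3)(3-γ)(2-γ)(1-γ)(k+1)^{-γ}; in particular q_k > 0. -/

import Mathlib

open Real Set

private lemma key_aux (γ a : ℝ) (hγ0 : 0 < γ) (hγ1 : γ < 1) (ha : 0 ≤ a) :
    (1 / 6) * ((3 - γ) * (2 - γ) * (1 - γ)) * (a + 1) ^ (-γ)
      < (3 - γ) * (a ^ (2 - γ) + (a + 1) ^ (2 - γ)) - 2 * ((a + 1) ^ (3 - γ) - a ^ (3 - γ)) := by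
  set C : ℝ := (3 - γ) * (2 - γ) * (1 - γ) with hC
  set b : ℝ := (a + 1) ^ (-γ) with hb
  set c : ℝ := C * b / 6 with hc
  set F : ℝ → ℝ := fun t =>
    (3 - γ) * (a ^ (2 - γ) * t + t * (a + t) ^ (2 - γ))
      - 2 * ((a + t) ^ (3 - γ) - a ^ (3 - γ)) - c * t ^ 3 with hF
  set G : ℝ → ℝ := fun t =>
    (3 - γ) * a ^ (2 - γ) - (3 - γ) * (a + t) ^ (2 - γ)
      + (3 - γ) * (2 - γ) * (t * (a + t) ^ (1 - γ)) - (3 * c) * t ^ 2 with hG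
  have h2γ : (1 : ℝ) ≤ 2 - γ := by linarith
  have h3γ : (1 : ℝ) ≤ 3 - γ := by linarith
  -- derivative of F is G, everywhere
  have hFderiv : ∀ t : ℝ, HasDerivAt F (G t) t := by
    intro t
    have h1 : HasDerivAt (fun t : ℝ => (a + t) ^ (2 - γ)) ((2 - γ) * (a + t) ^ (1 - γ)) t := by
      have := ((hasDerivAt_id t).const_add a).rpow_const (Or.inr h2γ)
      simpa [show (2 - γ - 1 : ℝ) = 1 - γ by ring, mul_comm] using this
    have h2 : HasDerivAt (fun t : ℝ => (a + t) ^ (3 - γ)) ((3 - γ) * (a + t) ^ (2 - γ)) t := by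
      have := ((hasDerivAt_id t).const_add a).rpow_const (Or.inr h3γ)
      simpa [show (3 - γ - 1 : ℝ) = 2 - γ by ring, mul_comm] using this
    have h3 : HasDerivAt (fun t : ℝ => t * (a + t) ^ (2 - γ))
        ((a + t) ^ (2 - γ) + t * ((2 - γ) * (a + t) ^ (1 - γ))) t := by
      simpa using (hasDerivAt_id t).fun_mul h1
    have hA : HasDerivAt (fun t : ℝ => a ^ (2 - γ) * t) (a ^ (2 - γ)) t := by
      simpa using (hasDerivAt_id t).const_mul (a ^ (2 - γ))
    have h4 : HasDerivAt (fun t : ℝ => t ^ 3) (3 * t ^ 2) t := by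
      simpa using hasDerivAt_pow 3 t
    have := (((hA.fun_add h3).const_mul (3 - γ)).fun_sub ((h2.sub_const (a ^ (3 - γ))).const_mul 2)).fun_sub
      (h4.const_mul c)
    refine this.congr_deriv ?_
    simp only [hG]
    ring
  -- derivative of G on positive t
  have hGderiv : ∀ t : ℝ, 0 < t → HasDerivAt G (C * t * ((a + t) ^ (-γ) - b)) t := by
    intro t ht
    have hat : a + t ≠ 0 := by positivity
    have h1 : HasDerivAt (fun t : ℝ => (a + t) ^ (2 - γ)) ((2 - γ) * (a + t) ^ (1 - γ)) t := by
      have := ((hasDerivAt_id t).const_add a).rpow_const (p := 2 - γ) (Or.inl hat)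
      simpa [show (2 - γ - 1 : ℝ) = 1 - γ by ring, mul_comm] using this
    have h5 : HasDerivAt (fun t : ℝ => (a + t) ^ (1 - γ)) ((1 - γ) * (a + t) ^ (-γ)) t := by
      have := ((hasDerivAt_id t).const_add a).rpow_const (p := 1 - γ) (Or.inl hat)
      simpa [show (1 - γ - 1 : ℝ) = -γ by ring, mul_comm] using this
    have h6 : HasDerivAt (fun t : ℝ => t * (a + t) ^ (1 - γ))
        ((a + t) ^ (1 - γ) + t * ((1 - γ) * (a + t) ^ (-γ))) t := by
      simpa using (hasDerivAt_id t).fun_mul h5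
    have h7 : HasDerivAt (fun t : ℝ => t ^ 2) (2 * t) t := by
      simpa using hasDerivAt_pow 2 t
    have := (((hasDerivAt_const t ((3 - γ) * a ^ (2 - γ))).fun_sub
      (h1.const_mul (3 - γ))).fun_add (h6.const_mul ((3 - γ) * (2 - γ)))).fun_sub
      (h7.const_mul (3 * c))
    refine this.congr_deriv ?_
    simp only [hC, hc, hb]
    ring
  -- continuity of G on [0,1]
  have hGcont : ContinuousOn G (Icc (0 : ℝ) 1) := by
    have c1 : Continuous fun t : ℝ => (a + t) ^ (2 - γ) :=
      (Real.continuous_rpow_const (by linarith)).comp (continuous_const.add continuous_id)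
    have c2 : Continuous fun t : ℝ => (a + t) ^ (1 - γ) :=
      (Real.continuous_rpow_const (by linarith)).comp (continuous_const.add continuous_id)
    exact (((continuous_const.sub (continuous_const.mul c1)).add
      (continuous_const.mul (continuous_id.mul c2))).sub
      (continuous_const.mul (continuous_pow 2))).continuousOn
  -- G is strictly monotone on [0,1]
  have hb' : 0 < b := Real.rpow_pos_of_pos (by linarith) _
  have hCpos : 0 < C := by
    have : (0:ℝ) < 3 - γ := by linarith
    have : (0:ℝ) < 2 - γ := by linarith
    have : (0:ℝ) < 1 - γ := by linarith
    positivity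
  have hGmono : StrictMonoOn G (Icc (0 : ℝ) 1) := by
    apply strictMonoOn_of_deriv_pos (convex_Icc 0 1) hGcont
    intro t ht
    rw [interior_Icc] at ht
    obtain ⟨ht0, ht1⟩ := ht
    rw [(hGderiv t ht0).deriv]
    have hlt : b < (a + t) ^ (-γ) := by
      have h1 : (a + t) ^ γ < (a + 1) ^ γ :=
        Real.rpow_lt_rpow (by linarith) (by linarith) hγ0
      have h2 : (0:ℝ) < (a + t) ^ γ := Real.rpow_pos_of_pos (by linarith) _
      rw [hb, Real.rpow_neg (by linarith), Real.rpow_neg (by linarith)]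
      exact inv_strictAnti₀ h2 h1
    exact mul_pos (mul_pos hCpos ht0) (sub_pos.2 hlt)
  have hG0 : G 0 = 0 := by simp [hG]
  -- F is strictly monotone on [0,1]
  have hFmono : StrictMonoOn F (Icc (0 : ℝ) 1) := by
    apply strictMonoOn_of_deriv_pos (convex_Icc 0 1)
      (fun t _ => (hFderiv t).continuousAt.continuousWithinAt)
    intro t ht
    rw [interior_Icc] at ht
    rw [(hFderiv t).deriv, ← hG0]
    exact hGmono (by constructor <;> norm_num) ⟨ht.1.le, ht.2.le⟩ ht.1
  have hF0 : F 0 = 0 := by simp [hF]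
  have h01 : F 0 < F 1 := hFmono (by constructor <;> norm_num) (by constructor <;> norm_num)
    one_pos
  rw [hF0] at h01
  have hF1 : F 1 = (3 - γ) * (a ^ (2 - γ) + (a + 1) ^ (2 - γ))
      - 2 * ((a + 1) ^ (3 - γ) - a ^ (3 - γ)) - c := by
    simp only [hF]; ring
  rw [hF1] at h01
  rw [hc] at h01
  linarith

theorem stmt_6 (γ : ℝ) (hγ0 : 0 < γ) (hγ1 : γ < 1) (k : ℕ) :
    (2 / 3) * (3 - γ) * (2 - γ) * (1 - γ) * ((k : ℝ) + 1) ^ (-γ)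
        < -8 * (((k : ℝ) + 1) ^ (3 - γ) - (k : ℝ) ^ (3 - γ))
            + 4 * (3 - γ) * (((k : ℝ) + 1) ^ (2 - γ) + (k : ℝ) ^ (2 - γ)) ∧
    0 < -8 * (((k : ℝ) + 1) ^ (3 - γ) - (k : ℝ) ^ (3 - γ))
            + 4 * (3 - γ) * (((k : ℝ) + 1) ^ (2 - γ) + (k : ℝ) ^ (2 - γ)) := by
  have key := key_aux γ (k : ℝ) hγ0 hγ1 (Nat.cast_nonneg k)
  have hb : (0:ℝ) < ((k : ℝ) + 1) ^ (-γ) :=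
    Real.rpow_pos_of_pos (by positivity) _
  constructor
  · nlinarith [key]
  · nlinarith [key, mul_pos (mul_pos (mul_pos (show (0:ℝ) < 3 - γ by linarith)
      (show (0:ℝ) < 2 - γ by linarith)) (show (0:ℝ) < 1 - γ by linarith)) hb]
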